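/- Let p be a prime and A an abelian group in which every element has order a finite power of p and in which A[p] is finite. Then A is the internal direct sum of a divisible subgroup D and a finite subgroup F: there exist subgroups D and F of A with D divisible, F finite, D ∩ F = {0}, and D + F = A. (Abstract form of Lemma 3.21, part (i).) -/

import Mathlib

section StmtAux

variable {A : Type*} [AddCommGroup A]

/-- The subgroup of elements killed by `p ^ n`. -/
def auxT (p n : ℕ) : AddSubgroup A where
  carrier := {x | p ^ n • x = 0}
  zero_mem' := by simp
  add_mem' := by
    intro a b ha hb
    simp only [Set.mem_setOf_eq, smul_add] at *
    rw [ha, hb, add_zero]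
  neg_mem' := by
    intro a ha
    simp only [Set.mem_setOf_eq, smul_neg] at *
    rw [ha, neg_zero]

@[simp] lemma mem_auxT {p n : ℕ} {x : A} : x ∈ auxT (A := A) p n ↔ p ^ n • x = 0 := Iff.rfl

/-- The subgroup `p ^ n • A`. -/
def auxP (p n : ℕ) : AddSubgroup A where
  carrier := {x | ∃ y, p ^ n • y = x}
  zero_mem' := ⟨0, smul_zero _⟩
  add_mem' := by
    rintro a b ⟨y, rfl⟩ ⟨z, rfl⟩
    exact ⟨y + z, smul_add _ _ _⟩
  neg_mem' := by
    rintro a ⟨y, rfl⟩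
    exact ⟨-y, smul_neg _ _⟩

@[simp] lemma mem_auxP {p n : ℕ} {x : A} :
    x ∈ auxP (A := A) p n ↔ ∃ y, p ^ n • y = x := Iff.rfl

/-- The candidate divisible subgroup: `⋂ n, p ^ n • A`. -/
def auxD (p : ℕ) : AddSubgroup A := ⨅ n, auxP p n

lemma mem_auxD {p : ℕ} {x : A} : x ∈ auxD (A := A) p ↔ ∀ n, x ∈ auxP (A := A) p n := by
  simp [auxD, AddSubgroup.mem_iInf]

lemma auxP_antitone {p : ℕ} {m n : ℕ} (h : m ≤ n) :
    auxP (A := A) p n ≤ auxP (A := A) p m := by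
  rintro x ⟨y, rfl⟩
  refine ⟨p ^ (n - m) • y, ?_⟩
  rw [smul_smul, ← pow_add, Nat.add_sub_cancel' h]

lemma auxT_mono {p : ℕ} {m n : ℕ} (h : m ≤ n) :
    auxT (A := A) p m ≤ auxT (A := A) p n := by
  intro x hx
  simp only [mem_auxT] at hx ⊢
  have : p ^ n • x = p ^ (n - m) • (p ^ m • x) := by
    rw [smul_smul, ← pow_add, Nat.sub_add_cancel h]
  rw [this, hx, smul_zero]

lemma auxT_finite (p : ℕ) (hfin : {x : A | p • x = 0}.Finite) (n : ℕ) :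
    {x : A | p ^ n • x = 0}.Finite := by
  induction n with
  | zero =>
      have : {x : A | p ^ 0 • x = 0} = {(0 : A)} := by
        ext x; simp
      rw [this]; exact Set.finite_singleton 0
  | succ n ih =>
      have hsub : {x : A | p ^ (n + 1) • x = 0} ⊆
          ⋃ y ∈ {x : A | p ^ n • x = 0}, {x : A | p • x = y} := by
        intro x hx
        simp only [Set.mem_setOf_eq] at hx
        have : p ^ n • (p • x) = 0 := by
          rw [smul_smul, ← pow_succ, hx]
        exact Set.mem_biUnion this rfl
      refine Set.Finite.subset (Set.Finite.biUnion ih ?_) hsub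
      intro y _
      rcases Set.eq_empty_or_nonempty {x : A | p • x = y} with h | ⟨x₀, hx₀⟩
      · rw [h]; exact Set.finite_empty
      · have : {x : A | p • x = y} ⊆ (fun t => x₀ + t) '' {x : A | p • x = 0} := by
          intro x hx
          simp only [Set.mem_setOf_eq] at hx hx₀
          refine ⟨x - x₀, ?_, ?_⟩
          · simp only [Set.mem_setOf_eq, smul_sub, hx, hx₀, sub_self]
          · show x₀ + (x - x₀) = x
            abel
        exact Set.Finite.subset (hfin.image _) this

/-- Stabilization of `A[p] ∩ p^n A`. -/
lemma aux_stab (p : ℕ) (hfin : {x : A | p • x = 0}.Finite) :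
    ∃ N : ℕ, ∀ z : A, p • z = 0 → z ∈ auxP (A := A) p N → ∀ n, z ∈ auxP (A := A) p n := by
  classical
  set S : ℕ → Set A := fun n => {z : A | p • z = 0} ∩ (auxP (A := A) p n : Set A) with hS
  have hSfin : ∀ n, (S n).Finite := fun n => hfin.subset Set.inter_subset_left
  have hanti : ∀ m n : ℕ, m ≤ n → S n ⊆ S m := by
    intro m n h z hz
    exact ⟨hz.1, auxP_antitone h hz.2⟩
  have hne : (Set.range fun n => (S n).ncard).Nonempty := ⟨(S 0).ncard, 0, rfl⟩
  obtain ⟨N, hNcard⟩ : ∃ N, (S N).ncard = sInf (Set.range fun n => (S n).ncard) :=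
    Nat.sInf_mem hne
  refine ⟨N, fun z hz1 hz2 n => ?_⟩
  rcases le_total n N with h | h
  · exact auxP_antitone h hz2
  · have hsub : S n ⊆ S N := hanti N n h
    have hcard : (S N).ncard ≤ (S n).ncard := by
      rw [hNcard]
      exact Nat.sInf_le ⟨n, rfl⟩
    have : S n = S N := Set.eq_of_subset_of_ncard_le hsub hcard (hSfin N)
    have hzS : z ∈ S N := ⟨hz1, hz2⟩
    rw [← this] at hzS
    exact hzS.2

lemma auxD_pdiv {A : Type*} [AddCommGroup A] (p N : ℕ)
    (hN : ∀ z : A, p • z = 0 → z ∈ auxP (A := A) p N → ∀ n, z ∈ auxP (A := A) p n)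
    {d : A} (hd : d ∈ auxD (A := A) p) : ∃ e ∈ auxD (A := A) p, p • e = d := by
  rw [mem_auxD] at hd
  obtain ⟨y, hy⟩ := hd (N + 1)
  set e := p ^ N • y with he
  have hpe : p • e = d := by rw [he, smul_smul, ← pow_succ', hy]
  have heP : e ∈ auxP (A := A) p N := ⟨y, rfl⟩
  refine ⟨e, ?_, hpe⟩
  rw [mem_auxD]
  intro n
  set n' := max n N with hn'
  obtain ⟨y', hy'⟩ := hd (n' + 1)
  set e' := p ^ n' • y' with he'
  have hpe' : p • e' = d := by rw [he', smul_smul, ← pow_succ', hy']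
  have he'P : e' ∈ auxP (A := A) p n' := ⟨y', rfl⟩
  have hdiff : p • (e - e') = 0 := by rw [smul_sub, hpe, hpe', sub_self]
  have hdiffP : e - e' ∈ auxP (A := A) p N :=
    sub_mem heP (auxP_antitone (le_max_right n N) he'P)
  have : e - e' ∈ auxP (A := A) p n' := hN _ hdiff hdiffP n'
  have heP' : e ∈ auxP (A := A) p n' := by
    have := add_mem this he'P
    simpa using this
  exact auxP_antitone (le_max_left n N) heP'

lemma auxD_powdiv {A : Type*} [AddCommGroup A] (p N : ℕ)
    (hN : ∀ z : A, p • z = 0 → z ∈ auxP (A := A) p N → ∀ n, z ∈ auxP (A := A) p n)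
    (m : ℕ) {d : A} (hd : d ∈ auxD (A := A) p) :
    ∃ e ∈ auxD (A := A) p, p ^ m • e = d := by
  induction m generalizing d with
  | zero => exact ⟨d, hd, by simp⟩
  | succ m ih =>
      obtain ⟨e₁, he₁, hpe₁⟩ := auxD_pdiv p N hN hd
      obtain ⟨e, he, hpe⟩ := ih he₁
      refine ⟨e, he, ?_⟩
      rw [pow_succ', mul_smul, hpe, hpe₁]

lemma aux_split {A : Type*} [AddCommGroup A] (p N : ℕ)
    (hN : ∀ z : A, p • z = 0 → z ∈ auxP (A := A) p N → ∀ n, z ∈ auxP (A := A) p n)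
    {m : ℕ} : ∀ {x : A}, p ^ m • x = 0 → ∃ d ∈ auxD (A := A) p, p ^ N • (x - d) = 0 := by
  induction m with
  | zero =>
      intro x hx
      simp only [pow_zero, one_smul] at hx
      exact ⟨0, zero_mem _, by rw [hx, sub_zero, smul_zero]⟩
  | succ m ih =>
      intro x hx
      have hpx : p ^ m • (p • x) = 0 := by
        rw [smul_smul, ← pow_succ, hx]
      obtain ⟨d, hdD, hd⟩ := ih hpx
      obtain ⟨d', hd'D, hpd'⟩ := auxD_pdiv p N hN hdD
      set z := p ^ N • (x - d') with hz
      have hz1 : p • z = 0 := by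
        rw [hz, smul_smul, mul_comm, ← smul_smul, smul_sub, smul_sub, hpd', ← smul_sub, hd]
      have hz2 : z ∈ auxP (A := A) p N := ⟨x - d', rfl⟩
      have hzD : z ∈ auxD (A := A) p := by
        rw [mem_auxD]; exact hN z hz1 hz2
      obtain ⟨w, hwD, hw⟩ := auxD_powdiv p N hN N hzD
      refine ⟨d' + w, add_mem hd'D hwD, ?_⟩
      have : x - (d' + w) = (x - d') - w := by abel
      rw [this, smul_sub, hw, hz, sub_self]

lemma auxD_div {A : Type*} [AddCommGroup A] (p : ℕ) (hp : p.Prime)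
    (htor : ∀ x : A, ∃ m : ℕ, p ^ m • x = 0) (N : ℕ)
    (hN : ∀ z : A, p • z = 0 → z ∈ auxP (A := A) p N → ∀ n, z ∈ auxP (A := A) p n) :
    ∀ d ∈ auxD (A := A) p, ∀ n : ℕ, 1 ≤ n → ∃ e ∈ auxD (A := A) p, n • e = d := by
  intro d hd n hn
  obtain ⟨k, u, hu, hnu⟩ := Nat.exists_eq_pow_mul_and_not_dvd (Nat.one_le_iff_ne_zero.mp hn) p
    hp.ne_one
  obtain ⟨e₁, he₁, hpe₁⟩ := auxD_powdiv p N hN k hd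
  obtain ⟨r, hr⟩ := htor e₁
  have hcop : IsCoprime (u : ℤ) ((p : ℤ) ^ r) := by
    have h1 : IsCoprime ((p : ℤ)) (u : ℤ) :=
      (Nat.prime_iff_prime_int.mp hp).coprime_iff_not_dvd.mpr (by exact_mod_cast hu)
    exact (h1.pow_left).symm
  obtain ⟨a, b, hab⟩ := hcop
  refine ⟨a • e₁, zsmul_mem he₁ a, ?_⟩
  have key : ((u : ℤ) * a) • e₁ = e₁ := by
    have : ((u : ℤ) * a) • e₁ = (1 - b * (p : ℤ) ^ r) • e₁ := by
      rw [← hab]; ring_nf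
    rw [this, sub_smul, one_smul, mul_smul]
    have : ((p : ℤ) ^ r) • e₁ = 0 := by
      have := hr
      rw [← natCast_zsmul] at this
      push_cast at this ⊢
      exact this
    rw [this, smul_zero, sub_zero]
  have hn' : (n : ℤ) = (p : ℤ) ^ k * (u : ℤ) := by rw [hnu]; push_cast; ring
  calc n • (a • e₁) = (n : ℤ) • (a • e₁) := (natCast_zsmul _ _).symm
    _ = ((p : ℤ) ^ k * ((u : ℤ) * a)) • e₁ := by rw [smul_smul, hn']; ring_nf
    _ = (p : ℤ) ^ k • (((u : ℤ) * a) • e₁) := by rw [mul_smul]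
    _ = (p : ℤ) ^ k • e₁ := by rw [key]
    _ = d := by rw [← hpe₁]; norm_cast

end StmtAux

/-- Let `p` be a prime and `A` an abelian group in which every element has order a finite
power of `p` and whose `p`-torsion `A[p]` is finite. Then `A` is the internal direct sum of
a divisible subgroup `D` and a finite subgroup `F`. -/
theorem stmt_10 {A : Type*} [AddCommGroup A] (p : ℕ) (hp : p.Prime)
    (htor : ∀ x : A, ∃ m : ℕ, p ^ m • x = 0)
    (hfin : {x : A | p • x = 0}.Finite) :
    ∃ D F : AddSubgroup A,
      (∀ d ∈ D, ∀ n : ℕ, 1 ≤ n → ∃ e ∈ D, n • e = d) ∧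
      (F : Set A).Finite ∧ D ⊓ F = ⊥ ∧ D ⊔ F = ⊤ := by
  classical
  obtain ⟨N, hN⟩ := aux_stab p hfin
  set D : AddSubgroup A := auxD (A := A) p with hDdef
  set M : ℕ := max N 1 with hMdef
  have hM1 : 1 ≤ M := le_max_right _ _
  have hNM : N ≤ M := le_max_left _ _
  have hTMfin : ((auxT (A := A) p M : Set A)).Finite := by
    have := auxT_finite p hfin M
    convert this using 1
    rfl
  set 𝒮 : Set (AddSubgroup A) := {F | F ≤ auxT (A := A) p M ∧ D ⊓ F = ⊥} with h𝒮
  have hSfin : 𝒮.Finite := by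
    apply Set.Finite.of_finite_image (f := fun F : AddSubgroup A => (F : Set A))
    · apply (hTMfin.finite_subsets).subset
      rintro _ ⟨F, hF, rfl⟩
      exact hF.1
    · exact fun F _ F' _ h => SetLike.coe_injective h
  have hSne : 𝒮.Nonempty := ⟨⊥, bot_le, by simp⟩
  obtain ⟨F, hF𝒮, hFmax⟩ : ∃ F ∈ 𝒮, ∀ F'' ∈ 𝒮, F ≤ F'' → F = F'' := by
    obtain ⟨F, hF⟩ := Set.Finite.exists_maximal hSfin hSne
    exact ⟨F, hF.1, fun F'' h1 h2 => le_antisymm h2 (hF.2 h1 h2)⟩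
  have hFT : F ≤ auxT (A := A) p M := hF𝒮.1
  have hDF : D ⊓ F = ⊥ := hF𝒮.2
  have hdiv_p : ∀ d ∈ D, ∃ e ∈ D, p • e = d := fun d hd => auxD_pdiv p N hN hd
  -- the key inclusion
  have hsub : (auxT (A := A) p M : Set A) ⊆ ↑(D ⊔ F) := by
    intro x₀ hx₀T
    by_contra hx₀
    have hx₀T' : p ^ M • x₀ = 0 := hx₀T
    have hQM : p ^ M • x₀ ∈ D ⊔ F := by rw [hx₀T']; exact zero_mem _
    set Q : ℕ → Prop := fun k => p ^ k • x₀ ∈ D ⊔ F with hQ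
    have hQex : ∃ k, Q k := ⟨M, hQM⟩
    set k₀ := Nat.find hQex with hk₀def
    have hk₀ : Q k₀ := Nat.find_spec hQex
    have hk₀pos : 0 < k₀ := by
      rcases Nat.eq_zero_or_pos k₀ with h | h
      · exfalso
        apply hx₀
        have := hk₀
        rw [h] at this
        simpa [hQ] using this
      · exact h
    set y₀ := p ^ (k₀ - 1) • x₀ with hy₀def
    have hy₀n : y₀ ∉ D ⊔ F := Nat.find_min hQex (Nat.sub_lt hk₀pos one_pos)
    have hpy₀ : p • y₀ ∈ D ⊔ F := by
      have : p • y₀ = p ^ k₀ • x₀ := by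
        rw [hy₀def, smul_smul, ← pow_succ', Nat.sub_add_cancel hk₀pos]
      rw [this]; exact hk₀
    have hy₀T : p ^ M • y₀ = 0 := by
      rw [hy₀def, smul_smul, mul_comm, ← smul_smul, hx₀T', smul_zero]
    obtain ⟨d, hdD, f, hfF, hdf⟩ := (AddSubgroup.mem_sup).mp hpy₀
    obtain ⟨d', hd'D, hpd'⟩ := hdiv_p d hdD
    set y := y₀ - d' with hydef
    have hyn : y ∉ D ⊔ F := by
      intro h
      apply hy₀n
      have : y₀ = y + d' := by rw [hydef]; abel
      rw [this]
      exact add_mem h (AddSubgroup.mem_sup_left hd'D)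
    have hpy : p • y = f := by
      rw [hydef, smul_sub, hpd']
      rw [← hdf]; abel
    have hyT : p ^ M • y = 0 := by
      have h1 : p ^ M • y ∈ F := by
        have : p ^ M • y = p ^ (M - 1) • (p • y) := by
          rw [smul_smul, ← pow_succ, Nat.sub_add_cancel hM1]
        rw [this, hpy]
        exact AddSubgroup.nsmul_mem _ hfF _
      have h2 : p ^ M • y ∈ D := by
        rw [hydef, smul_sub, hy₀T, zero_sub]
        exact neg_mem (AddSubgroup.nsmul_mem _ hd'D _)
      have : p ^ M • y ∈ D ⊓ F := ⟨h2, h1⟩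
      rw [hDF] at this
      exact this
    set F'' := F ⊔ AddSubgroup.closure {y} with hF''def
    have hF''T : F'' ≤ auxT (A := A) p M := by
      refine sup_le hFT ?_
      rw [AddSubgroup.closure_le]
      intro t ht
      rw [Set.mem_singleton_iff] at ht
      subst ht
      exact hyT
    have hne : D ⊓ F'' ≠ ⊥ := by
      intro hb
      have hmem : F'' ∈ 𝒮 := ⟨hF''T, hb⟩
      have hFF : F = F'' := hFmax F'' hmem le_sup_left
      have hyF : y ∈ F := by
        rw [hFF]
        exact AddSubgroup.mem_sup_right (AddSubgroup.subset_closure (Set.mem_singleton y))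
      exact hyn (AddSubgroup.mem_sup_right hyF)
    obtain ⟨w, hw, hw0⟩ : ∃ w ∈ D ⊓ F'', w ≠ 0 := by
      by_contra h
      push_neg at h
      exact hne ((AddSubgroup.eq_bot_iff_forall _).mpr h)
    obtain ⟨hwD, hwF''⟩ := hw
    obtain ⟨f₂, hf₂, c, hc, hsum⟩ := (AddSubgroup.mem_sup).mp hwF''
    obtain ⟨nn, hnn⟩ := AddSubgroup.mem_closure_singleton.mp hc
    by_cases hdvd : (p : ℤ) ∣ nn
    · obtain ⟨c', rfl⟩ := hdvd
      have hcF : ((p : ℤ) * c') • y ∈ F := by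
        rw [mul_comm, mul_smul]
        have : (p : ℤ) • y = f := by rw [natCast_zsmul, hpy]
        rw [this]
        exact AddSubgroup.zsmul_mem _ hfF _
      have hwF : w ∈ F := by
        rw [← hsum, ← hnn]
        exact add_mem hf₂ hcF
      have : w ∈ D ⊓ F := ⟨hwD, hwF⟩
      rw [hDF] at this
      exact hw0 this
    · have hcop : IsCoprime ((p : ℤ)) nn := (Nat.prime_iff_prime_int.mp hp).coprime_iff_not_dvd.mpr hdvd
      obtain ⟨a, b, hab⟩ := hcop
      apply hyn
      have hyeq : y = a • ((p : ℤ) • y) + b • (nn • y) := by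
        rw [smul_smul, smul_smul, ← add_smul, hab, one_smul]
      have h1 : (p : ℤ) • y = f := by rw [natCast_zsmul, hpy]
      have h2 : nn • y = w - f₂ := by rw [hnn]; rw [← hsum]; abel
      rw [hyeq, h1, h2, smul_sub]
      have : a • f + (b • w - b • f₂) ∈ D ⊔ F := by
        refine add_mem (AddSubgroup.mem_sup_right (AddSubgroup.zsmul_mem _ hfF _)) ?_
        refine sub_mem (AddSubgroup.mem_sup_left (AddSubgroup.zsmul_mem _ hwD _))
          (AddSubgroup.mem_sup_right (AddSubgroup.zsmul_mem _ hf₂ _))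
      exact this
  refine ⟨D, F, auxD_div p hp htor N hN, hTMfin.subset hFT, hDF, ?_⟩
  rw [eq_top_iff]
  intro x _
  obtain ⟨m, hm⟩ := htor x
  obtain ⟨d, hdD, hsplit⟩ := aux_split p N hN hm
  have hxd : x - d ∈ auxT (A := A) p M := auxT_mono hNM hsplit
  have : x = d + (x - d) := by abel
  rw [this]
  exact add_mem (AddSubgroup.mem_sup_left hdD) (hsub hxd)
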